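/- Let P and Q be permutations of {1,...,n} such that P∘Q is an n-cycle. For braid words β with permutation P, define the Q-Gaussian parity: a classical crossing of β is even iff its chord in the chord diagram of the closure of β·β_Q is linked with an even number of other chords. Then under the classical third Reidemeister move ζ_iζ_{i+1}ζ_i → ζ_{i+1}ζ_iζ_{i+1}, the number of odd crossings (in the Q-Gaussian parity) among the three crossings on the left-hand side is even. -/

import Mathlib

set_option maxHeartbeats 1000000

namespace OneTermBracket

/-- Letters (generators) of free braid words on `n` strands:
`zeta i` is a classical crossing, `tau i` a virtual crossing, `1 ≤ i+1 ≤ n-1`. -/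
inductive Letter (n : ℕ) where
  | zeta (i : Fin (n-1))
  | tau  (i : Fin (n-1))
deriving DecidableEq

namespace Letter

def idx {n : ℕ} : Letter n → Fin (n-1)
  | zeta i => i
  | tau i => i

def isZeta {n : ℕ} : Letter n → Bool
  | zeta _ => true
  | tau _ => false

end Letter

def lo {n : ℕ} (i : Fin (n-1)) : Fin n := ⟨i.1, by have := i.2; omega⟩
def hi {n : ℕ} (i : Fin (n-1)) : Fin n := ⟨i.1 + 1, by have := i.2; omega⟩

/-- The transposition `(i, i+1)` of `{1, …, n}`. -/
def sPerm {n : ℕ} (i : Fin (n-1)) : Equiv.Perm (Fin n) := Equiv.swap (lo i) (hi i)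

/-- Each letter acts on positions as the transposition `(i, i+1)`. -/
def transOf {n : ℕ} (g : Letter n) : Equiv.Perm (Fin n) := sPerm g.idx

/-- The permutation realized by the prefix of length `j` of a braid word,
mapping the top label of a strand to its position at level `j`. -/
def prefPerm {n : ℕ} (w : List (Letter n)) (j : ℕ) : Equiv.Perm (Fin n) :=
  (((w.take j).map transOf).reverse).prod

/-- The permutation `P(β)` of a braid word (top endpoint `k` goes to bottom endpoint `P k`). -/
def permOf {n : ℕ} (w : List (Letter n)) : Equiv.Perm (Fin n) :=
  ((w.map transOf).reverse).prod

/-- The unordered pair of (top labels of the) strands crossing at position `j` of `w`. -/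
def strandsAt {n : ℕ} (w : List (Letter n)) (j : ℕ) : Option (Sym2 (Fin n)) :=
  (w[j]?).map fun g => s((prefPerm w j)⁻¹ (lo g.idx), (prefPerm w j)⁻¹ (hi g.idx))

/-- Component-wise parity determined by a partition `{1,…,n} = N₁ ⊔ N₂` (encoded by
`c : Fin n → Bool`): a classical crossing is odd (`1`) iff its two strands lie in
different parts. Non-classical positions get `0`. -/
def cwParity {n : ℕ} (c : Fin n → Bool) (w : List (Letter n)) (j : ℕ) : ZMod 2 :=
  match w[j]? with
  | some (.zeta i) =>
      if c ((prefPerm w j)⁻¹ (lo i)) = c ((prefPerm w j)⁻¹ (hi i)) then 0 else 1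
  | _ => 0

/-- The defining relations of `F_n` and `FB_n` which do not involve
`ζ_i² = 1` or the classical third Reidemeister move ("strong" moves). -/
inductive RelStrong (n : ℕ) : List (Letter n) → List (Letter n) → Prop
  | tt (i : Fin (n-1)) : RelStrong n [.tau i, .tau i] []
  | virt (i : Fin (n-1)) : RelStrong n [.zeta i, .tau i] [.tau i, .zeta i]
  | far_zz (i j : Fin (n-1)) (h : 2 ≤ Nat.dist i j) :
      RelStrong n [.zeta i, .zeta j] [.zeta j, .zeta i]
  | far_zt (i j : Fin (n-1)) (h : 2 ≤ Nat.dist i j) :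
      RelStrong n [.zeta i, .tau j] [.tau j, .zeta i]
  | far_tt (i j : Fin (n-1)) (h : 2 ≤ Nat.dist i j) :
      RelStrong n [.tau i, .tau j] [.tau j, .tau i]
  | r3v (i j : Fin (n-1)) (h : (j:ℕ) = (i:ℕ) + 1) :
      RelStrong n [.tau i, .tau j, .tau i] [.tau j, .tau i, .tau j]
  | semi (i j : Fin (n-1)) (h : (j:ℕ) = (i:ℕ) + 1) :
      RelStrong n [.tau i, .tau j, .zeta i] [.zeta j, .tau i, .tau j]

/-- The defining relations of `F_n`. -/
inductive RelF (n : ℕ) : List (Letter n) → List (Letter n) → Prop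
  | strong {r1 r2} : RelStrong n r1 r2 → RelF n r1 r2
  | zz (i : Fin (n-1)) : RelF n [.zeta i, .zeta i] []

/-- The defining relations of the free braid group `FB_n`. -/
inductive RelFB (n : ℕ) : List (Letter n) → List (Letter n) → Prop
  | ofF {r1 r2} : RelF n r1 r2 → RelFB n r1 r2
  | r3c (i j : Fin (n-1)) (h : (j:ℕ) = (i:ℕ) + 1) :
      RelFB n [.zeta i, .zeta j, .zeta i] [.zeta j, .zeta i, .zeta j]

/-- One application of a relation from `R` inside a word. -/
def StepOf {n : ℕ} (R : List (Letter n) → List (Letter n) → Prop)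
    (w1 w2 : List (Letter n)) : Prop :=
  ∃ A B r1 r2, R r1 r2 ∧ w1 = A ++ r1 ++ B ∧ w2 = A ++ r2 ++ B

/-- Strong equivalence: all moves of `F_n` except `ζ_i² = 1`. -/
def StrongEq {n : ℕ} (w1 w2 : List (Letter n)) : Prop :=
  Relation.EqvGen (StepOf (RelStrong n)) w1 w2

/-- Equivalence of braid words as elements of `F_n`. -/
def EqF {n : ℕ} (w1 w2 : List (Letter n)) : Prop :=
  Relation.EqvGen (StepOf (RelF n)) w1 w2

/-- Equivalence of braid words as elements of the free braid group `FB_n`. -/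
def EqFB {n : ℕ} (w1 w2 : List (Letter n)) : Prop :=
  Relation.EqvGen (StepOf (RelFB n)) w1 w2

/-- The parity axioms, for a parity `P` defined on the class `C` of braid words.
`P w j` is the parity of the crossing at position `j` of `w` (only classical
positions matter). -/
structure IsParity {n : ℕ} (C : List (Letter n) → Prop)
    (P : List (Letter n) → ℕ → ZMod 2) : Prop where
  /-- Crossings not taking part in a relation keep their parity (part before). -/
  untouched_left : ∀ A B r1 r2, RelFB n r1 r2 →
    C (A ++ r1 ++ B) → C (A ++ r2 ++ B) → ∀ j < A.length,
    P (A ++ r1 ++ B) j = P (A ++ r2 ++ B) j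
  /-- Crossings not taking part in a relation keep their parity (part after). -/
  untouched_right : ∀ A B r1 r2, RelFB n r1 r2 →
    C (A ++ r1 ++ B) → C (A ++ r2 ++ B) → ∀ j < B.length,
    P (A ++ r1 ++ B) (A.length + r1.length + j) = P (A ++ r2 ++ B) (A.length + r2.length + j)
  /-- In commutation-type relations (far commutativity, virtualization), the two
  letters keep their parities. -/
  comm : ∀ A B x y, RelFB n [x, y] [y, x] →
    C (A ++ [x, y] ++ B) → C (A ++ [y, x] ++ B) →
    P (A ++ [x, y] ++ B) A.length = P (A ++ [y, x] ++ B) (A.length + 1) ∧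
    P (A ++ [x, y] ++ B) (A.length + 1) = P (A ++ [y, x] ++ B) A.length
  /-- In a classical second Reidemeister move both crossings have the same parity. -/
  r2c : ∀ A B (i : Fin (n-1)),
    C (A ++ [.zeta i, .zeta i] ++ B) → C (A ++ B) →
    P (A ++ [.zeta i, .zeta i] ++ B) A.length
      = P (A ++ [.zeta i, .zeta i] ++ B) (A.length + 1)
  /-- In a semivirtual move, the classical crossing keeps its parity. -/
  semiv : ∀ A B (i j : Fin (n-1)), (j:ℕ) = (i:ℕ) + 1 →
    C (A ++ [.tau i, .tau j, .zeta i] ++ B) →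
    C (A ++ [.zeta j, .tau i, .tau j] ++ B) →
    P (A ++ [.tau i, .tau j, .zeta i] ++ B) (A.length + 2)
      = P (A ++ [.zeta j, .tau i, .tau j] ++ B) A.length
  /-- In a classical third Reidemeister move the number of odd crossings is even. -/
  r3_even : ∀ A B (i j : Fin (n-1)), (j:ℕ) = (i:ℕ) + 1 →
    C (A ++ [.zeta i, .zeta j, .zeta i] ++ B) →
    C (A ++ [.zeta j, .zeta i, .zeta j] ++ B) →
    P (A ++ [.zeta i, .zeta j, .zeta i] ++ B) A.length
      + P (A ++ [.zeta i, .zeta j, .zeta i] ++ B) (A.length + 1)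
      + P (A ++ [.zeta i, .zeta j, .zeta i] ++ B) (A.length + 2) = 0
  /-- In a classical third Reidemeister move, upper/middle/lower crossings on the
  left correspond to lower/middle/upper crossings on the right with equal parities. -/
  r3_corr : ∀ A B (i j : Fin (n-1)), (j:ℕ) = (i:ℕ) + 1 →
    C (A ++ [.zeta i, .zeta j, .zeta i] ++ B) →
    C (A ++ [.zeta j, .zeta i, .zeta j] ++ B) →
    P (A ++ [.zeta i, .zeta j, .zeta i] ++ B) A.length
      = P (A ++ [.zeta j, .zeta i, .zeta j] ++ B) (A.length + 2) ∧
    P (A ++ [.zeta i, .zeta j, .zeta i] ++ B) (A.length + 1)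
      = P (A ++ [.zeta j, .zeta i, .zeta j] ++ B) (A.length + 1) ∧
    P (A ++ [.zeta i, .zeta j, .zeta i] ++ B) (A.length + 2)
      = P (A ++ [.zeta j, .zeta i, .zeta j] ++ B) A.length

/-- Delete from `w` all classical letters whose parity (given by `par`) is even. -/
def deleteEven {n : ℕ} (w : List (Letter n)) (par : ℕ → ZMod 2) : List (Letter n) :=
  (List.range w.length).filterMap fun j =>
    (w[j]?).bind fun g =>
      match g with
      | .zeta i => if par j = 0 then none else some (.zeta i)
      | .tau i => some (.tau i)

/-- The one-term parity bracket: delete all even classical crossings. -/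
def bracket {n : ℕ} (P : List (Letter n) → ℕ → ZMod 2) (w : List (Letter n)) :
    List (Letter n) :=
  deleteEven w (P w)

/-- Positions of classical crossings of a word. -/
def ZetaPos {n : ℕ} (w : List (Letter n)) : Set ℕ :=
  {j | ∃ i, w[j]? = some (Letter.zeta i)}

/-- The classical crossings at positions `j1 < j2` form a bigon: they lie on the same
pair of strands, and no classical crossing between them lies on either of those strands. -/
def IsBigon {n : ℕ} (w : List (Letter n)) (j1 j2 : ℕ) : Prop :=
  j1 < j2 ∧ j1 ∈ ZetaPos w ∧ j2 ∈ ZetaPos w ∧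
  strandsAt w j1 = strandsAt w j2 ∧
  ∀ k, j1 < k → k < j2 → k ∈ ZetaPos w →
    ∀ e e', strandsAt w j1 = some e → strandsAt w k = some e' → ∀ a ∈ e, a ∉ e'

/-- Delete the letters at two given positions. -/
def delete2 {n : ℕ} (w : List (Letter n)) (j1 j2 : ℕ) : List (Letter n) :=
  (w.eraseIdx (max j1 j2)).eraseIdx (min j1 j2)

/-- One bigon reduction. -/
def BigonStep {n : ℕ} (w w' : List (Letter n)) : Prop :=
  ∃ j1 j2, IsBigon w j1 j2 ∧ w' = delete2 w j1 j2

/-- A word is irreducible if it admits no bigon reduction. -/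
def Irreducible {n : ℕ} (w : List (Letter n)) : Prop := ¬ ∃ j1 j2, IsBigon w j1 j2

/-- Number of classical letters of a word. -/
def countZeta {n : ℕ} (w : List (Letter n)) : ℕ := (w.filter Letter.isZeta).length

/-- `φ` is an isomorphism of the decorated graphs `Γ(w1) ≅ Γ(w2)`, encoded
combinatorially: a bijection of classical crossings preserving the pair of strands
through each crossing, the order of crossings along each strand, and the endpoint
structure (the permutation). -/
structure IsGammaIso {n : ℕ} (w1 w2 : List (Letter n)) (φ : ℕ → ℕ) : Prop where
  maps : ∀ j ∈ ZetaPos w1, φ j ∈ ZetaPos w2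
  inj : ∀ j ∈ ZetaPos w1, ∀ j' ∈ ZetaPos w1, φ j = φ j' → j = j'
  surj : ∀ k ∈ ZetaPos w2, ∃ j ∈ ZetaPos w1, φ j = k
  strands : ∀ j ∈ ZetaPos w1, strandsAt w2 (φ j) = strandsAt w1 j
  order : ∀ j ∈ ZetaPos w1, ∀ j' ∈ ZetaPos w1, j < j' →
    (∃ e e' a, strandsAt w1 j = some e ∧ strandsAt w1 j' = some e' ∧ a ∈ e ∧ a ∈ e') →
    φ j < φ j'
  perm : permOf w1 = permOf w2

/-! ### The groups `F_n` and `FB_n` as presented groups -/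

/-- Generators: `Sum.inl i` is the classical generator `ζ_i`,
`Sum.inr i` is the virtual generator `τ_i`. -/
abbrev GGen (n : ℕ) := Fin (n-1) ⊕ Fin (n-1)

def zg {n : ℕ} (i : Fin (n-1)) : FreeGroup (GGen n) := FreeGroup.of (Sum.inl i)
def tg {n : ℕ} (i : Fin (n-1)) : FreeGroup (GGen n) := FreeGroup.of (Sum.inr i)

/-- The relators of `F_n`. -/
def FRels (n : ℕ) : Set (FreeGroup (GGen n)) :=
  (⋃ i, {zg i * zg i}) ∪ (⋃ i, {tg i * tg i}) ∪
  (⋃ i, {zg i * tg i * (tg i * zg i)⁻¹}) ∪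
  (⋃ (i : Fin (n-1)) (j : Fin (n-1)) (_ : 2 ≤ Nat.dist i j),
    {zg i * zg j * (zg j * zg i)⁻¹, zg i * tg j * (tg j * zg i)⁻¹,
     tg i * tg j * (tg j * tg i)⁻¹}) ∪
  (⋃ (i : Fin (n-1)) (j : Fin (n-1)) (_ : (j:ℕ) = (i:ℕ) + 1),
    {tg i * tg j * tg i * (tg j * tg i * tg j)⁻¹,
     tg i * tg j * zg i * (zg j * tg i * tg j)⁻¹})

/-- The relators of `FB_n`: those of `F_n` together with the classical third
Reidemeister relation. -/
def FBRels (n : ℕ) : Set (FreeGroup (GGen n)) :=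
  FRels n ∪
  (⋃ (i : Fin (n-1)) (j : Fin (n-1)) (_ : (j:ℕ) = (i:ℕ) + 1),
    {zg i * zg j * zg i * (zg j * zg i * zg j)⁻¹})

/-- The group `F_n`. -/
abbrev FGrp (n : ℕ) := PresentedGroup (FRels n)

/-- The free braid group `FB_n`. -/
abbrev FBGrp (n : ℕ) := PresentedGroup (FBRels n)

def zF {n : ℕ} (i : Fin (n-1)) : FGrp n := PresentedGroup.of (Sum.inl i)
def tF {n : ℕ} (i : Fin (n-1)) : FGrp n := PresentedGroup.of (Sum.inr i)

/-- Evaluation of a braid word in `F_n`. -/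
def evalF {n : ℕ} (w : List (Letter n)) : FGrp n :=
  (w.map fun g => match g with
    | Letter.zeta i => zF i
    | Letter.tau i => tF i).prod

/-- For each unordered pair of strands, the mod-2 number of classical letters of `w`
at which these two strands cross (strand labels traced from the top). -/
def crossPar {n : ℕ} : List (Letter n) → Sym2 (Fin n) → ZMod 2
  | [], _ => 0
  | g :: rest, e =>
    (match g with
     | Letter.zeta i => if e = s(lo i, hi i) then (1 : ZMod 2) else 0
     | Letter.tau _ => 0) + crossPar rest (e.map (transOf g))

/-! ### Chord diagrams and the Gaussian parity -/

/-- The setoid on strands given by `SameCycle`; its classes are the orbits of `σ`,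
i.e. the components of the closure. -/
def sameCycleSetoid {n : ℕ} (σ : Equiv.Perm (Fin n)) : Setoid (Fin n) :=
  ⟨σ.SameCycle, ⟨Equiv.Perm.SameCycle.refl σ, Equiv.Perm.SameCycle.symm,
    Equiv.Perm.SameCycle.trans⟩⟩

/-- The rank of a strand in the single cycle of `σ` starting from strand `0`. -/
noncomputable def rankIn {n : ℕ} [NeZero n] (σ : Equiv.Perm (Fin n)) (a : Fin n) : ℕ :=
  ((Function.invFun (fun k : Fin n => (σ ^ (k : ℕ)) 0) a : Fin n) : ℕ)

/-- Coordinates on the core circle of the two endpoints of the chord of the classical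
crossing at position `j` (the circle traverses the strands in the cyclic order of `σ`). -/
noncomputable def chordEnds {n : ℕ} [NeZero n] (w : List (Letter n))
    (σ : Equiv.Perm (Fin n)) (j : ℕ) : ℕ × ℕ :=
  match w[j]? with
  | some (Letter.zeta i) =>
      (rankIn σ ((prefPerm w j)⁻¹ (lo i)) * w.length + j,
       rankIn σ ((prefPerm w j)⁻¹ (hi i)) * w.length + j)
  | _ => (0, 0)

/-- Two chords are linked iff the endpoints of one separate the endpoints of the
other on the core circle. -/
def LinkedChords {n : ℕ} [NeZero n] (w : List (Letter n)) (σ : Equiv.Perm (Fin n))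
    (j k : ℕ) : Prop :=
  Xor' (min (chordEnds w σ j).1 (chordEnds w σ j).2 < (chordEnds w σ k).1 ∧
        (chordEnds w σ k).1 < max (chordEnds w σ j).1 (chordEnds w σ j).2)
       (min (chordEnds w σ j).1 (chordEnds w σ j).2 < (chordEnds w σ k).2 ∧
        (chordEnds w σ k).2 < max (chordEnds w σ j).1 (chordEnds w σ j).2)

/-- The Gaussian parity of the classical crossing at position `j`: the mod-2 number
of chords linked with its chord. Even (`0`) iff linked with evenly many chords. -/
noncomputable def gaussParity {n : ℕ} [NeZero n] (w : List (Letter n))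
    (σ : Equiv.Perm (Fin n)) (j : ℕ) : ZMod 2 :=
  (Nat.card {k : ℕ // k < w.length ∧ k ∈ ZetaPos w ∧ k ≠ j ∧ LinkedChords w σ j k} : ZMod 2)



section AuxGauss


lemma lexlt {L r r' m m' : ℕ} (hm : m < L) (hm' : m' < L) :
    r * L + m < r' * L + m' ↔ (r < r' ∨ (r = r' ∧ m < m')) := by
  constructor
  · intro h
    rcases lt_trichotomy r r' with h1 | h1 | h1
    · exact Or.inl h1
    · exact Or.inr ⟨h1, by subst h1; omega⟩
    · exfalso
      have : r' * L + L ≤ r * L := by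
        calc r' * L + L = (r' + 1) * L := by ring
          _ ≤ r * L := Nat.mul_le_mul_right L h1
      omega
  · rintro (h1 | ⟨rfl, h1⟩)
    · have : r * L + L ≤ r' * L := by
        calc r * L + L = (r + 1) * L := by ring
          _ ≤ r' * L := Nat.mul_le_mul_right L h1
      omega
    · omega

lemma coord_ne {L r r' m m' : ℕ} (hm : m < L) (hm' : m' < L) (h : m ≠ m') :
    r * L + m ≠ r' * L + m' := by
  intro he
  rcases lt_trichotomy r r' with h1 | h1 | h1
  · have := (lexlt hm hm' (r := r) (r' := r')).2 (Or.inl h1); omega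
  · subst h1; omega
  · have := (lexlt hm' hm (r := r') (r' := r)).2 (Or.inl h1); omega

lemma coord_ne' {L r r' m : ℕ} (hm : m < L) (h : r ≠ r') :
    r * L + m ≠ r' * L + m := by
  intro he
  rcases lt_trichotomy r r' with h1 | h1 | h1
  · have := (lexlt hm hm (r := r) (r' := r')).2 (Or.inl h1); omega
  · exact h h1
  · have := (lexlt hm hm (r := r') (r' := r)).2 (Or.inl h1); omega

instance xorDecAux {a b : Prop} [Decidable a] [Decidable b] : Decidable (Xor' a b) :=
  inferInstanceAs (Decidable (Xor a b))

lemma ind_xor (P Q : Prop) [Decidable P] [Decidable Q] :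
    (if Xor' P Q then (1 : ZMod 2) else 0)
      = (if P then 1 else 0) + (if Q then 1 else 0) := by
  by_cases hP : P <;> by_cases hQ : Q <;> simp [Xor', hP, hQ] <;> decide

lemma ind_inside {e1 e2 z : ℕ} (h1 : z ≠ e1) (h2 : z ≠ e2) :
    (if (min e1 e2 < z ∧ z < max e1 e2) then (1 : ZMod 2) else 0)
      = (if z < e1 then 1 else 0) + (if z < e2 then 1 else 0) := by
  have hiff : (min e1 e2 < z ∧ z < max e1 e2) ↔ Xor' (z < e1) (z < e2) := by
    unfold Xor' Xor; omega
  rw [if_congr hiff rfl rfl, ind_xor]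

lemma ind_lt_congr {L r rz m m' k : ℕ} (hm : m < L) (hm' : m' < L) (hk : k < L)
    (h : k < m ↔ k < m') :
    (if rz * L + k < r * L + m then (1 : ZMod 2) else 0)
      = (if rz * L + k < r * L + m' then 1 else 0) := by
  refine if_congr ?_ rfl rfl
  rw [lexlt hk hm, lexlt hk hm']
  tauto

lemma xor_symm {a1 a2 b1 b2 : ℕ} (ha : a1 ≠ a2) (hb : b1 ≠ b2) (h1 : a1 ≠ b1)
    (h2 : a1 ≠ b2) (h3 : a2 ≠ b1) (h4 : a2 ≠ b2) :
    (Xor' (min a1 a2 < b1 ∧ b1 < max a1 a2) (min a1 a2 < b2 ∧ b2 < max a1 a2)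
      ↔ Xor' (min b1 b2 < a1 ∧ a1 < max b1 b2) (min b1 b2 < a2 ∧ a2 < max b1 b2)) := by
  unfold Xor' Xor; omega

lemma natCard_eq_filter {L : ℕ} (P : ℕ → Prop) [DecidablePred P] (h : ∀ k, P k → k < L) :
    Nat.card {k : ℕ // P k} = ((Finset.range L).filter P).card := by
  rw [← Nat.card_eq_finsetCard]
  refine Nat.card_congr (Equiv.subtypeEquiv (Equiv.refl ℕ) ?_)
  intro k
  simp only [Equiv.refl_apply, Finset.mem_coe, Finset.mem_filter, Finset.mem_range]
  exact ⟨fun hP => ⟨h k hP, hP⟩, fun h' => h'.2⟩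

lemma triple_linked_sum {L p k ra rb rc rx ry : ℕ} (hp2 : p + 2 < L) (hk : k < L)
    (hkp : k ≠ p) (hkp1 : k ≠ p + 1) (hkp2 : k ≠ p + 2)
    (hab : ra ≠ rb) (hac : ra ≠ rc) (hbc : rb ≠ rc) :
    (if Xor' (min (ra*L+p) (rb*L+p) < rx*L+k ∧ rx*L+k < max (ra*L+p) (rb*L+p))
             (min (ra*L+p) (rb*L+p) < ry*L+k ∧ ry*L+k < max (ra*L+p) (rb*L+p))
       then (1 : ZMod 2) else 0)
    + (if Xor' (min (ra*L+(p+1)) (rc*L+(p+1)) < rx*L+k ∧ rx*L+k < max (ra*L+(p+1)) (rc*L+(p+1)))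
               (min (ra*L+(p+1)) (rc*L+(p+1)) < ry*L+k ∧ ry*L+k < max (ra*L+(p+1)) (rc*L+(p+1)))
       then (1 : ZMod 2) else 0)
    + (if Xor' (min (rb*L+(p+2)) (rc*L+(p+2)) < rx*L+k ∧ rx*L+k < max (rb*L+(p+2)) (rc*L+(p+2)))
               (min (rb*L+(p+2)) (rc*L+(p+2)) < ry*L+k ∧ ry*L+k < max (rb*L+(p+2)) (rc*L+(p+2)))
       then (1 : ZMod 2) else 0) = 0 := by
  classical
  have hp0 : p < L := by omega
  have hp1 : p + 1 < L := by omega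
  rw [ind_xor, ind_xor, ind_xor]
  rw [ind_inside (coord_ne hk hp0 hkp) (coord_ne hk hp0 hkp),
      ind_inside (coord_ne hk hp0 hkp) (coord_ne hk hp0 hkp),
      ind_inside (coord_ne hk hp1 hkp1) (coord_ne hk hp1 hkp1),
      ind_inside (coord_ne hk hp1 hkp1) (coord_ne hk hp1 hkp1),
      ind_inside (coord_ne hk hp2 hkp2) (coord_ne hk hp2 hkp2),
      ind_inside (coord_ne hk hp2 hkp2) (coord_ne hk hp2 hkp2)]
  rw [ind_lt_congr hp1 hp0 hk (by omega) (r := ra) (rz := rx),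
      ind_lt_congr hp1 hp0 hk (by omega) (r := ra) (rz := ry),
      ind_lt_congr hp2 hp0 hk (by omega) (r := rb) (rz := rx),
      ind_lt_congr hp2 hp0 hk (by omega) (r := rb) (rz := ry),
      ind_lt_congr hp2 hp1 hk (by omega) (r := rc) (rz := rx),
      ind_lt_congr hp2 hp1 hk (by omega) (r := rc) (rz := ry)]
  generalize (if rx*L+k < ra*L+p then (1 : ZMod 2) else 0) = u1
  generalize (if rx*L+k < rb*L+p then (1 : ZMod 2) else 0) = u2
  generalize (if rx*L+k < rc*L+(p+1) then (1 : ZMod 2) else 0) = u3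
  generalize (if ry*L+k < ra*L+p then (1 : ZMod 2) else 0) = v1
  generalize (if ry*L+k < rb*L+p then (1 : ZMod 2) else 0) = v2
  generalize (if ry*L+k < rc*L+(p+1) then (1 : ZMod 2) else 0) = v3
  revert u1 u2 u3 v1 v2 v3
  decide


lemma prefPerm_succ {n : ℕ} (w : List (Letter n)) (j : ℕ) (g : Letter n)
    (hg : w[j]? = some g) : prefPerm w (j+1) = transOf g * prefPerm w j := by
  unfold prefPerm
  rw [List.take_succ, hg]
  simp

lemma rankIn_injective {n : ℕ} [NeZero n] (σ : Equiv.Perm (Fin n))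
    (hcyc : σ.IsCycle) (hsupp : σ.support.card = n) :
    ∀ x y : Fin n, rankIn σ x = rankIn σ y → x = y := by
  classical
  have hσ0 : ∀ x : Fin n, σ x ≠ x := by
    intro x
    have huniv : σ.support = Finset.univ :=
      Finset.eq_univ_of_card _ (by simpa using hsupp)
    have : x ∈ σ.support := huniv ▸ Finset.mem_univ x
    exact Equiv.Perm.mem_support.mp this
  have horder : orderOf σ = n := by rw [hcyc.orderOf, hsupp]
  have hfinj : Function.Injective (fun k : Fin n => (σ ^ (k : ℕ)) 0) := by
    intro k m hkm
    have hpow : σ ^ (k : ℕ) = σ ^ (m : ℕ) := hcyc.pow_eq_pow_iff.mpr ⟨0, hσ0 0, hkm⟩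
    have hk' : (k : ℕ) ∈ Set.Iio (orderOf σ) := by simp [horder, k.2]
    have hm' : (m : ℕ) ∈ Set.Iio (orderOf σ) := by simp [horder, m.2]
    exact Fin.ext (pow_injOn_Iio_orderOf hk' hm' hpow)
  have hfsurj : Function.Surjective (fun k : Fin n => (σ ^ (k : ℕ)) 0) :=
    Finite.surjective_of_injective hfinj
  intro x y hxy
  have hx := Function.invFun_eq (hfsurj x)
  have hy := Function.invFun_eq (hfsurj y)
  unfold rankIn at hxy
  have : Function.invFun (fun k : Fin n => (σ ^ (k : ℕ)) 0) x
      = Function.invFun (fun k : Fin n => (σ ^ (k : ℕ)) 0) y := Fin.ext hxy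
  rw [← hx, ← hy, this]

end AuxGauss

/-- for the `Q`-Gaussian parity (defined via linking numbers of chords
in the chord diagram of the closure of `β·β_Q`, the closure being a single circle),
the number of odd crossings among the three crossings of a classical third
Reidemeister move is even. -/
theorem gaussian_r3_even (n : ℕ) [NeZero n] (Qp : Equiv.Perm (Fin n))
    (A B : List (Letter n)) (i j : Fin (n-1)) (hij : (j:ℕ) = (i:ℕ) + 1)
    (w : List (Letter n)) (hw : w = A ++ [.zeta i, .zeta j, .zeta i] ++ B)
    (σ : Equiv.Perm (Fin n)) (hσ : σ = Qp * permOf w)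
    (hcyc : σ.IsCycle) (hsupp : σ.support.card = n) :
    gaussParity w σ A.length + gaussParity w σ (A.length + 1)
      + gaussParity w σ (A.length + 2) = 0 := by
  classical
  have hp2 : A.length + 2 < w.length := by
    rw [hw]
    simp only [List.length_append, List.length_cons, List.length_nil]
    omega
  have h0 : w[A.length]? = some (Letter.zeta i) := by
    rw [hw, List.append_assoc, List.getElem?_append_right (le_refl A.length)]
    simp
  have h1 : w[A.length + 1]? = some (Letter.zeta j) := by
    rw [hw, List.append_assoc, List.getElem?_append_right (by omega : A.length ≤ A.length + 1)]
    simp [Nat.add_sub_cancel_left]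
  have h2 : w[A.length + 2]? = some (Letter.zeta i) := by
    rw [hw, List.append_assoc, List.getElem?_append_right (by omega : A.length ≤ A.length + 2)]
    simp [Nat.add_sub_cancel_left]
  have hg1 : prefPerm w (A.length + 1) = transOf (Letter.zeta i) * prefPerm w A.length :=
    prefPerm_succ w A.length _ h0
  have hg2 : prefPerm w (A.length + 2) = transOf (Letter.zeta j) * prefPerm w (A.length + 1) :=
    prefPerm_succ w (A.length + 1) _ h1
  have hloj : lo j = hi i := by apply Fin.ext; simp [lo, hi, hij]
  have htz : ∀ (t : Fin (n-1)), transOf (Letter.zeta t) = Equiv.swap (lo t) (hi t) :=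
    fun t => rfl
  have ne_hj_lo : hi j ≠ lo i := Fin.ne_of_val_ne (show (j : ℕ) + 1 ≠ (i : ℕ) by omega)
  have ne_hj_hi : hi j ≠ hi i := Fin.ne_of_val_ne (show (j : ℕ) + 1 ≠ (i : ℕ) + 1 by omega)
  have ne_lo_loj : lo i ≠ lo j := Fin.ne_of_val_ne (show (i : ℕ) ≠ (j : ℕ) by omega)
  have ne_lo_hij : lo i ≠ hi j := Fin.ne_of_val_ne (show (i : ℕ) ≠ (j : ℕ) + 1 by omega)
  have ne_lo_hi : lo i ≠ hi i := Fin.ne_of_val_ne (show (i : ℕ) ≠ (i : ℕ) + 1 by omega)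
  -- strand endpoint computations
  have e1 : (prefPerm w (A.length + 1))⁻¹ (lo j) = (prefPerm w A.length)⁻¹ (lo i) := by
    rw [hg1, mul_inv_rev, Equiv.Perm.mul_apply, htz, Equiv.swap_inv, hloj,
      Equiv.swap_apply_right]
  have e2 : (prefPerm w (A.length + 1))⁻¹ (hi j) = (prefPerm w A.length)⁻¹ (hi j) := by
    rw [hg1, mul_inv_rev, Equiv.Perm.mul_apply, htz, Equiv.swap_inv,
      Equiv.swap_apply_of_ne_of_ne ne_hj_lo ne_hj_hi]
  have e3 : (prefPerm w (A.length + 2))⁻¹ (lo i) = (prefPerm w A.length)⁻¹ (hi i) := by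
    rw [hg2, hg1, mul_inv_rev, Equiv.Perm.mul_apply, mul_inv_rev, Equiv.Perm.mul_apply,
      htz, htz, Equiv.swap_inv, Equiv.swap_inv,
      Equiv.swap_apply_of_ne_of_ne ne_lo_loj ne_lo_hij, Equiv.swap_apply_left]
  have hswj : Equiv.swap (lo j) (hi j) (hi i) = hi j := by
    rw [← hloj]; exact Equiv.swap_apply_left _ _
  have e4 : (prefPerm w (A.length + 2))⁻¹ (hi i) = (prefPerm w A.length)⁻¹ (hi j) := by
    rw [hg2, hg1, mul_inv_rev, Equiv.Perm.mul_apply, mul_inv_rev, Equiv.Perm.mul_apply,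
      htz, htz, Equiv.swap_inv, Equiv.swap_inv, hswj,
      Equiv.swap_apply_of_ne_of_ne ne_hj_lo ne_hj_hi]
  set ra := rankIn σ ((prefPerm w A.length)⁻¹ (lo i)) with hradef
  set rb := rankIn σ ((prefPerm w A.length)⁻¹ (hi i)) with hrbdef
  set rc := rankIn σ ((prefPerm w A.length)⁻¹ (hi j)) with hrcdef
  have hrinj := rankIn_injective σ hcyc hsupp
  have hab : ra ≠ rb := by
    intro h
    rw [hradef, hrbdef] at h
    exact ne_lo_hi ((prefPerm w A.length)⁻¹.injective (hrinj _ _ h))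
  have hac : ra ≠ rc := by
    intro h
    rw [hradef, hrcdef] at h
    exact ne_lo_hij ((prefPerm w A.length)⁻¹.injective (hrinj _ _ h))
  have hbc : rb ≠ rc := by
    intro h
    rw [hrbdef, hrcdef] at h
    have := (prefPerm w A.length)⁻¹.injective (hrinj _ _ h)
    exact ne_hj_hi this.symm
  have hc0 : chordEnds w σ A.length
      = (ra * w.length + A.length, rb * w.length + A.length) := by
    rw [hradef, hrbdef]
    simp only [chordEnds, h0]
  have hc1 : chordEnds w σ (A.length + 1)
      = (ra * w.length + (A.length + 1), rc * w.length + (A.length + 1)) := by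
    rw [hradef, hrcdef]
    simp only [chordEnds, h1, e1, e2]
  have hc2 : chordEnds w σ (A.length + 2)
      = (rb * w.length + (A.length + 2), rc * w.length + (A.length + 2)) := by
    rw [hrbdef, hrcdef]
    simp only [chordEnds, h2, e3, e4]
  -- convert gaussParity to finite sums
  have hgp : ∀ T, gaussParity w σ T =
      ∑ k ∈ Finset.range w.length,
        (if (k < w.length ∧ k ∈ ZetaPos w ∧ k ≠ T ∧ LinkedChords w σ T k)
          then (1 : ZMod 2) else 0) := by
    intro T
    unfold gaussParity
    rw [natCard_eq_filter
      (fun k => k < w.length ∧ k ∈ ZetaPos w ∧ k ≠ T ∧ LinkedChords w σ T k)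
      (fun k hk => hk.1)]
    rw [Finset.card_filter]
    push_cast
    rfl
  rw [hgp, hgp, hgp, ← Finset.sum_add_distrib, ← Finset.sum_add_distrib]
  have hsub : ({A.length, A.length + 1, A.length + 2} : Finset ℕ)
      ⊆ Finset.range w.length := by
    intro x hx
    simp only [Finset.mem_insert, Finset.mem_singleton] at hx
    simp only [Finset.mem_range]
    omega
  rw [← Finset.sum_sdiff hsub]
  have houter : ∀ k ∈ Finset.range w.length
      \ ({A.length, A.length + 1, A.length + 2} : Finset ℕ),
      ((if (k < w.length ∧ k ∈ ZetaPos w ∧ k ≠ A.length ∧ LinkedChords w σ A.length k)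
          then (1 : ZMod 2) else 0)
        + (if (k < w.length ∧ k ∈ ZetaPos w ∧ k ≠ A.length + 1
              ∧ LinkedChords w σ (A.length + 1) k) then (1 : ZMod 2) else 0)
        + (if (k < w.length ∧ k ∈ ZetaPos w ∧ k ≠ A.length + 2
              ∧ LinkedChords w σ (A.length + 2) k) then (1 : ZMod 2) else 0)) = 0 := by
    intro k hk
    simp only [Finset.mem_sdiff, Finset.mem_range, Finset.mem_insert,
      Finset.mem_singleton] at hk
    obtain ⟨hkL, hkt⟩ := hk
    push_neg at hkt
    obtain ⟨hkp, hkp1, hkp2⟩ := hkt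
    by_cases hz : k ∈ ZetaPos w
    · have hmem := hz
      obtain ⟨ik, hik⟩ := hz
      have hck : chordEnds w σ k
          = (rankIn σ ((prefPerm w k)⁻¹ (lo ik)) * w.length + k,
             rankIn σ ((prefPerm w k)⁻¹ (hi ik)) * w.length + k) := by
        simp only [chordEnds, hik]
      have hT : ∀ T, k ≠ T →
          (if (k < w.length ∧ k ∈ ZetaPos w ∧ k ≠ T ∧ LinkedChords w σ T k)
            then (1 : ZMod 2) else 0) = (if LinkedChords w σ T k then 1 else 0) := by
        intro T hkT
        exact if_congr ⟨fun h => h.2.2.2, fun h => ⟨hkL, hmem, hkT, h⟩⟩ rfl rfl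
      rw [hT _ hkp, hT _ hkp1, hT _ hkp2]
      simp only [LinkedChords, hc0, hc1, hc2, hck]
      exact triple_linked_sum hp2 hkL hkp hkp1 hkp2 hab hac hbc
    · have hz0 : ∀ T, (if (k < w.length ∧ k ∈ ZetaPos w ∧ k ≠ T ∧ LinkedChords w σ T k)
          then (1 : ZMod 2) else 0) = 0 := fun T => if_neg (fun hc => hz hc.2.1)
      rw [hz0, hz0, hz0]
      simp
  rw [Finset.sum_eq_zero houter, zero_add]
  -- the part of the sum over the three crossings of the triangle
  have hzp : A.length ∈ ZetaPos w := ⟨i, h0⟩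
  have hzp1 : A.length + 1 ∈ ZetaPos w := ⟨j, h1⟩
  have hzp2 : A.length + 2 ∈ ZetaPos w := ⟨i, h2⟩
  have hTT : ∀ T k, k < w.length → k ∈ ZetaPos w → k ≠ T →
      (if (k < w.length ∧ k ∈ ZetaPos w ∧ k ≠ T ∧ LinkedChords w σ T k)
        then (1 : ZMod 2) else 0) = (if LinkedChords w σ T k then 1 else 0) := by
    intro T k hkL hmem hkT
    exact if_congr ⟨fun h => h.2.2.2, fun h => ⟨hkL, hmem, hkT, h⟩⟩ rfl rfl
  have hTself : ∀ T, (if (T < w.length ∧ T ∈ ZetaPos w ∧ T ≠ T ∧ LinkedChords w σ T T)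
      then (1 : ZMod 2) else 0) = 0 := fun T => if_neg (fun hc => hc.2.2.1 rfl)
  rw [show ({A.length, A.length + 1, A.length + 2} : Finset ℕ)
    = insert A.length (insert (A.length + 1) {A.length + 2}) from rfl]
  rw [Finset.sum_insert (by simp), Finset.sum_insert (by simp), Finset.sum_singleton]
  rw [hTself, hTT (A.length + 1) A.length (by omega) hzp (by omega),
    hTT (A.length + 2) A.length (by omega) hzp (by omega),
    hTT A.length (A.length + 1) (by omega) hzp1 (by omega),
    hTT (A.length + 2) (A.length + 1) (by omega) hzp1 (by omega),
    hTT A.length (A.length + 2) (by omega) hzp2 (by omega),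
    hTT (A.length + 1) (A.length + 2) (by omega) hzp2 (by omega)]
  rw [hTself, hTself]
  have hpL : A.length < w.length := by omega
  have hp1L : A.length + 1 < w.length := by omega
  have hsym1 : LinkedChords w σ A.length (A.length + 1)
      ↔ LinkedChords w σ (A.length + 1) A.length := by
    simp only [LinkedChords, hc0, hc1]
    exact xor_symm (coord_ne' hpL hab) (coord_ne' hp1L hac)
      (coord_ne hpL hp1L (by omega)) (coord_ne hpL hp1L (by omega))
      (coord_ne hpL hp1L (by omega)) (coord_ne hpL hp1L (by omega))
  have hsym2 : LinkedChords w σ A.length (A.length + 2)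
      ↔ LinkedChords w σ (A.length + 2) A.length := by
    simp only [LinkedChords, hc0, hc2]
    exact xor_symm (coord_ne' hpL hab) (coord_ne' hp2 hbc)
      (coord_ne hpL hp2 (by omega)) (coord_ne hpL hp2 (by omega))
      (coord_ne hpL hp2 (by omega)) (coord_ne hpL hp2 (by omega))
  have hsym3 : LinkedChords w σ (A.length + 1) (A.length + 2)
      ↔ LinkedChords w σ (A.length + 2) (A.length + 1) := by
    simp only [LinkedChords, hc1, hc2]
    exact xor_symm (coord_ne' hp1L hac) (coord_ne' hp2 hbc)
      (coord_ne hp1L hp2 (by omega)) (coord_ne hp1L hp2 (by omega))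
      (coord_ne hp1L hp2 (by omega)) (coord_ne hp1L hp2 (by omega))
  rw [if_congr hsym1 rfl rfl, if_congr hsym2 rfl rfl, if_congr hsym3 rfl rfl]
  generalize (if LinkedChords w σ (A.length + 1) A.length then (1 : ZMod 2) else 0) = x
  generalize (if LinkedChords w σ (A.length + 2) A.length then (1 : ZMod 2) else 0) = y
  generalize (if LinkedChords w σ (A.length + 2) (A.length + 1) then (1 : ZMod 2) else 0) = z
  revert x y z
  decide

end OneTermBracket
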